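/- Fix K ≥ 1, k ∈ {1,…,K}, strictly positive reals ρ, ρ_SN, ς², σ², Φ², Φ_SN², β_1, …, β_K, and per-user energies E_1, …, E_K > 0. For each natural number M ≥ 1 set the transmit powers p_{k'}(M) = E_{k'}/M and define SINR_k^MRC(M) = M·ρ·p_k(M)·Φ²·β_k / ( Σ_{k'=1}^K p_{k'}(M)·β_{k'}·(ρ·Φ² + ς²·ρ_SN·Φ_SN²) + ς²·ρ_SN·p_k(M)·Φ_SN²·β_k + σ² ). Then SINR_k^MRC(M) → ρ·Φ²·E_k·β_k/σ² as M → ∞; in particular, the MRC achievable-rate lower bound log₂(1 + SINR_k^MRC(M)) converges to the strictly positive limit log₂(1 + ρ·Φ²·E_k·β_k/σ²), i.e., the power-scaling law of massive MIMO holds for RAQ-MIMO under MRC. -/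

import Mathlib

open Finset Filter

/-- MRC SINR lower bound of Theorem 1 with per-user powers `p k' = E k' / M`. -/
noncomputable def sinrMRC (K : ℕ) (ρ ρSN ς2 σ2 Φ2 ΦSN2 : ℝ)
    (β E : Fin K → ℝ) (k : Fin K) (M : ℕ) : ℝ :=
  (M : ℝ) * ρ * (E k / (M : ℝ)) * Φ2 * β k
    / ((∑ k', (E k' / (M : ℝ)) * β k' * (ρ * Φ2 + ς2 * ρSN * ΦSN2))
      + ς2 * ρSN * (E k / (M : ℝ)) * ΦSN2 * β k + σ2)

theorem power_scaling_law_mrc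
    (K : ℕ) (hK : 1 ≤ K) (k : Fin K)
    (ρ ρSN ς2 σ2 Φ2 ΦSN2 : ℝ)
    (hρ : 0 < ρ) (hρSN : 0 < ρSN) (hς2 : 0 < ς2)
    (hσ2 : 0 < σ2) (hΦ2 : 0 < Φ2) (hΦSN2 : 0 < ΦSN2)
    (β E : Fin K → ℝ) (hβ : ∀ k', 0 < β k') (hE : ∀ k', 0 < E k') :
    Tendsto (fun M : ℕ => sinrMRC K ρ ρSN ς2 σ2 Φ2 ΦSN2 β E k M) atTop
      (nhds (ρ * Φ2 * E k * β k / σ2)) ∧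
    Tendsto
      (fun M : ℕ => Real.logb 2 (1 + sinrMRC K ρ ρSN ς2 σ2 Φ2 ΦSN2 β E k M))
      atTop (nhds (Real.logb 2 (1 + ρ * Φ2 * E k * β k / σ2))) ∧
    0 < Real.logb 2 (1 + ρ * Φ2 * E k * β k / σ2) := by
  -- numerator tends (eventually constant) to ρ * Φ2 * E k * β k
  have hnum : Tendsto (fun M : ℕ => (M : ℝ) * ρ * (E k / (M : ℝ)) * Φ2 * β k)
      atTop (nhds (ρ * Φ2 * E k * β k)) := by
    have : (fun M : ℕ => (M : ℝ) * ρ * (E k / (M : ℝ)) * Φ2 * β k)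
        =ᶠ[atTop] fun _ => ρ * Φ2 * E k * β k := by
      filter_upwards [eventually_ge_atTop 1] with M hM
      have hM0 : (M : ℝ) ≠ 0 := by positivity
      field_simp
    exact Tendsto.congr' this.symm tendsto_const_nhds
  -- denominator tends to σ2
  set C : ℝ := (∑ k', E k' * β k' * (ρ * Φ2 + ς2 * ρSN * ΦSN2))
      + ς2 * ρSN * E k * ΦSN2 * β k with hC
  have hden : Tendsto (fun M : ℕ =>
      (∑ k', (E k' / (M : ℝ)) * β k' * (ρ * Φ2 + ς2 * ρSN * ΦSN2))
        + ς2 * ρSN * (E k / (M : ℝ)) * ΦSN2 * β k + σ2) atTop (nhds σ2) := by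
    have h1 : Tendsto (fun M : ℕ => C / (M : ℝ) + σ2) atTop (nhds σ2) := by
      have := (tendsto_const_div_atTop_nhds_zero_nat C).add
        (tendsto_const_nhds (x := σ2))
      simpa using this
    refine Tendsto.congr (fun M => ?_) h1
    rw [hC, add_div, Finset.sum_div]
    have hsum : (∑ k' : Fin K, E k' * β k' * (ρ * Φ2 + ς2 * ρSN * ΦSN2) / (M:ℝ))
        = ∑ k', (E k' / (M:ℝ)) * β k' * (ρ * Φ2 + ς2 * ρSN * ΦSN2) :=
      Finset.sum_congr rfl fun i _ => by ring
    rw [hsum]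
    ring
  constructor
  · have := hnum.div hden (ne_of_gt hσ2)
    exact this.congr (fun M => rfl)
  constructor
  · have hlim : Tendsto (fun M : ℕ => sinrMRC K ρ ρSN ς2 σ2 Φ2 ΦSN2 β E k M) atTop
        (nhds (ρ * Φ2 * E k * β k / σ2)) := by
      have := hnum.div hden (ne_of_gt hσ2)
      exact this.congr (fun M => rfl)
    have hpos : (0:ℝ) < 1 + ρ * Φ2 * E k * β k / σ2 := by
      have := hE k; have := hβ k; positivity
    have hcont : ContinuousAt (fun x : ℝ => Real.logb 2 (1 + x))
        (ρ * Φ2 * E k * β k / σ2) := by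
      have : ContinuousAt (fun x : ℝ => Real.log (1 + x))
          (ρ * Φ2 * E k * β k / σ2) :=
        (Real.continuousAt_log (ne_of_gt hpos)).comp
          (by fun_prop)
      unfold Real.logb
      exact this.div_const _
    exact hcont.tendsto.comp hlim
  · have h1 : (1:ℝ) < 1 + ρ * Φ2 * E k * β k / σ2 := by
      have : 0 < ρ * Φ2 * E k * β k / σ2 := by
        have := hβ k; have := hE k; positivity
      linarith
    exact Real.logb_pos (by norm_num) h1
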